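/- Let X ⊂ P^{n+1} be a hypersurface of degree d ≥ 2 and dimension n ≥ 2 over F_q. If the number of F_q-points of X equals Θ_n^{d,q} = (d-1)q^n + dq^{n-1} + q^{n-2} + ... + q + 1, then d ≤ q + 1; moreover d = q + 1 holds if and only if N_q(X) = N_q(P^{n+1}), i.e., X is a space-filling hypersurface. -/

import Mathlib

open Projectivization

lemma geom_aux (q m : ℕ) (h : 1 ≤ q) : (∑ i ∈ Finset.range m, q ^ i) * (q - 1) = q ^ m - 1 := by
  induction m with
  | zero => simp
  | succ k ih =>
    rw [Finset.sum_range_succ, add_mul, ih, pow_succ]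
    have h1 : 1 ≤ q ^ k := Nat.one_le_pow _ _ h
    have h3 : 1 ≤ q ^ k * q := Nat.one_le_of_lt (Nat.lt_of_lt_of_le h1 (Nat.le_mul_of_pos_right _ h)) |>.trans (le_refl _)
    zify [h1, h, h3]
    ring

lemma card_proj (K : Type*) [Field K] [Fintype K] (m : ℕ) :
    Nat.card (Projectivization K (Fin m → K)) = ∑ i ∈ Finset.range m, Fintype.card K ^ i := by
  classical
  set q := Fintype.card K with hq
  have hq1 : 1 ≤ q := Fintype.card_pos
  haveI : Finite (Projectivization K (Fin m → K)) := Quotient.finite _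
  -- fiber equivalence
  have fib : ∀ x : Projectivization K (Fin m → K),
      {v : {v : Fin m → K // v ≠ 0} // Projectivization.mk' K v = x} ≃ Kˣ := by
    intro x
    refine (Equiv.ofBijective (fun a : Kˣ =>
      (⟨⟨(a : K) • x.rep, smul_ne_zero a.ne_zero x.rep_nonzero⟩, ?_⟩ :
        {v : {v : Fin m → K // v ≠ 0} // Projectivization.mk' K v = x})) ⟨?_, ?_⟩).symm
    · rw [Projectivization.mk'_eq_mk]
      conv_rhs => rw [← x.mk_rep]
      rw [Projectivization.mk_eq_mk_iff]
      exact ⟨a, rfl⟩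
    · intro a b hab
      have : (a : K) • x.rep = (b : K) • x.rep := by
        simpa [Subtype.ext_iff] using hab
      exact Units.ext (smul_left_injective K x.rep_nonzero this)
    · rintro ⟨⟨v, hv⟩, hvx⟩
      rw [Projectivization.mk'_eq_mk] at hvx
      rw [← x.mk_rep, Projectivization.mk_eq_mk_iff] at hvx
      obtain ⟨a, ha⟩ := hvx
      exact ⟨a, by simp only [Subtype.ext_iff]; rw [← Units.smul_def]; exact ha⟩
  have e : {v : Fin m → K // v ≠ 0} ≃ Projectivization K (Fin m → K) × Kˣ :=
    ((Equiv.sigmaFiberEquiv (Projectivization.mk' K)).symm.trans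
      (Equiv.sigmaCongrRight fib)).trans (Equiv.sigmaEquivProd _ _)
  have hc : Nat.card {v : Fin m → K // v ≠ 0} =
      Nat.card (Projectivization K (Fin m → K)) * (q - 1) := by
    rw [Nat.card_congr e, Nat.card_prod, Nat.card_eq_fintype_card (α := Kˣ),
      Fintype.card_units]
  have hl : Nat.card {v : Fin m → K // v ≠ 0} = q ^ m - 1 := by
    rw [Nat.card_eq_fintype_card]
    rw [Fintype.card_subtype_compl, Fintype.card_subtype_eq, Fintype.card_fun,
      Fintype.card_fin]
  have hg := geom_aux q m hq1
  have h2 : 2 ≤ q := Fintype.one_lt_card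
  have : Nat.card (Projectivization K (Fin m → K)) * (q - 1) =
      (∑ i ∈ Finset.range m, q ^ i) * (q - 1) := by rw [hg, ← hl, hc]
  exact Nat.eq_of_mul_eq_mul_right (by omega) this


/-- if `N_q(X) = Θ_n^{d,q}` then `d ≤ q+1`, with `d = q+1` iff `X` is
space filling. -/
theorem stmt2 (q d n : ℕ) (hq : IsPrimePow q) (hn : 2 ≤ n) (hd : 2 ≤ d)
    (K : Type*) [Field K] [Fintype K] (hK : Fintype.card K = q)
    (P : MvPolynomial (Fin (n + 2)) K) (hP : P.IsHomogeneous d) (hP0 : P ≠ 0)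
    (hNX : Nat.card {x : Projectivization K (Fin (n + 2) → K) |
        MvPolynomial.eval x.rep P = 0} =
      (d - 1) * q ^ n + d * q ^ (n - 1) + ∑ i ∈ Finset.range (n - 1), q ^ i) :
    d ≤ q + 1 ∧
      (d = q + 1 ↔
        Nat.card {x : Projectivization K (Fin (n + 2) → K) |
            MvPolynomial.eval x.rep P = 0} =
          Nat.card (Projectivization K (Fin (n + 2) → K))) := by

  have hq2 : 2 ≤ q := hq.two_le
  haveI : Finite (Projectivization K (Fin (n + 2) → K)) := Quotient.finite _
  have hT : Nat.card (Projectivization K (Fin (n + 2) → K)) =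
      ∑ i ∈ Finset.range (n + 2), q ^ i := by rw [card_proj, hK]
  -- split the total sum
  obtain ⟨m, rfl⟩ : ∃ m, n = m + 2 := ⟨n - 2, by omega⟩
  have hsplit : ∑ i ∈ Finset.range (m + 2 + 2), q ^ i =
      (∑ i ∈ Finset.range (m + 1), q ^ i) + q ^ (m + 1) + q ^ (m + 2) + q ^ (m + 3) := by
    rw [show m + 2 + 2 = ((m + 1) + 1 + 1) + 1 by ring, Finset.sum_range_succ,
      Finset.sum_range_succ, Finset.sum_range_succ]
  have hrange : m + 2 - 1 = m + 1 := by omega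
  rw [hrange] at hNX
  set N := Nat.card {x : Projectivization K (Fin (m + 2 + 2) → K) |
      MvPolynomial.eval x.rep P = 0} with hN
  set s := ∑ i ∈ Finset.range (m + 1), q ^ i with hs
  have hle : N ≤ Nat.card (Projectivization K (Fin (m + 2 + 2) → K)) :=
    Nat.card_le_card_of_injective _ Subtype.val_injective
  rw [hT, hsplit] at hle
  rw [hNX] at hle ⊢
  rw [hsplit] at hT
  set B := q ^ (m + 1) with hB
  have hBpos : 0 < B := Nat.pow_pos (by omega)
  have e1 : q ^ (m + 2) = q * B := by rw [hB]; ring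
  have e2 : q ^ (m + 3) = q * q * B := by rw [hB]; ring
  rw [e1, e2] at hle hT
  rw [e1]
  -- hle : (d-1) * (q*B) + d * B + s ≤ s + B + q*B + q*q*B
  obtain ⟨e, rfl⟩ : ∃ e, d = e + 1 := ⟨d - 1, by omega⟩
  have key : ∀ x : ℕ, ((x + 1 - 1) * (q * B) + (x + 1) * B) = (x * (q + 1) + 1) * B := by
    intro x; simp; ring
  have hle2 : e * (q + 1) + 1 ≤ q * (q + 1) + 1 := by
    have h1 : (e * (q + 1) + 1) * B + s ≤ (q * (q + 1) + 1) * B + s := by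
      calc (e * (q + 1) + 1) * B + s = (e + 1 - 1) * (q * B) + (e + 1) * B + s := by
            rw [key]
        _ ≤ s + B + q * B + q * q * B := hle
        _ = (q * (q + 1) + 1) * B + s := by ring
    have := Nat.add_le_add_iff_right.mp h1
    exact Nat.le_of_mul_le_mul_right this hBpos
  have hdle : e + 1 ≤ q + 1 := by
    have : e ≤ q := by
      by_contra h
      have : q + 1 ≤ e := by omega
      nlinarith
    omega
  refine ⟨hdle, ?_, ?_⟩
  · rintro h
    have he : e = q := by omega
    subst he
    rw [hT, key]
    ring
  · intro h
    rw [hT, key] at h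
    have h2 : (e * (q + 1) + 1) * B + s = (q * (q + 1) + 1) * B + s :=
      h.trans (by ring)
    have h3 := Nat.add_right_cancel h2
    have h4 := Nat.eq_of_mul_eq_mul_right hBpos h3
    have : e = q := by
      have := Nat.eq_of_mul_eq_mul_right (show 0 < q + 1 by omega)
        (show e * (q+1) = q * (q+1) by omega)
      exact this
    omega
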